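/- For any design ξ with nonsingular information matrix M, setting ε = max_{x∈X} xᵀM⁻¹x − m, any support point x* of a D-optimum design ξ* on X satisfies d(ξ,x*) = x*ᵀM⁻¹x* ≥ h_m(ε) := m[1 + ε/2 − √(ε(4 + ε − 4/m))/2]. -/

import Mathlib

open Matrix BigOperators Finset

/-- Information matrix M(ξ) = ∑ w(x) x xᵀ of a finitely supported design. -/
noncomputable def infoM (m : ℕ) (S : Finset (Fin m → ℝ)) (w : (Fin m → ℝ) → ℝ) :
    Matrix (Fin m) (Fin m) ℝ := ∑ x ∈ S, w x • vecMulVec x x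

/-- A design: a probability weight function on the finite design space S. -/
def IsDesign (m : ℕ) (S : Finset (Fin m → ℝ)) (w : (Fin m → ℝ) → ℝ) : Prop :=
  (∀ x, 0 ≤ w x) ∧ ∑ x ∈ S, w x = 1

/-- Variance function d(ξ,x) = xᵀ M(ξ)⁻¹ x. -/
noncomputable def dvar (m : ℕ) (S : Finset (Fin m → ℝ)) (w : (Fin m → ℝ) → ℝ)
    (x : Fin m → ℝ) : ℝ := x ⬝ᵥ (infoM m S w)⁻¹ *ᵥ x

/-- D-optimality: w maximizes det M over all designs on S. -/
def IsDOptimal (m : ℕ) (S : Finset (Fin m → ℝ)) (w : (Fin m → ℝ) → ℝ) : Prop :=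
  IsDesign m S w ∧ ∀ v, IsDesign m S v → (infoM m S v).det ≤ (infoM m S w).det


/-- Scalar optimization: positive reals with bounded sum and bounded sum of inverses
are individually bounded below. -/
lemma scalar_bound (m : ℕ) (hm : 0 < m) (ε : ℝ) (hε : 0 ≤ ε)
    (μ : Fin m → ℝ) (hpos : ∀ i, 0 < μ i)
    (h1 : ∑ i, μ i ≤ m + ε) (h2 : ∑ i, (μ i)⁻¹ ≤ m) (i : Fin m) :
    1 + ε / 2 - Real.sqrt (ε * (4 + ε - 4 / m)) / 2 ≤ μ i := by
  have hmR : (1:ℝ) ≤ m := by exact_mod_cast hm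
  set lam := μ i with hlam
  have hlpos : 0 < lam := hpos i
  -- Cauchy-Schwarz over others
  have key : ((m:ℝ) - 1)^2 ≤ (m + ε - lam) * (m - lam⁻¹) := by
    have hsum1 : ∑ j ∈ univ.erase i, μ j = (∑ j, μ j) - lam := by
      rw [Finset.sum_erase_eq_sub (mem_univ i)]
    have hsum2 : ∑ j ∈ univ.erase i, (μ j)⁻¹ = (∑ j, (μ j)⁻¹) - lam⁻¹ := by
      rw [Finset.sum_erase_eq_sub (mem_univ i)]
    have hnn1 : (0:ℝ) ≤ ∑ j ∈ univ.erase i, μ j :=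
      Finset.sum_nonneg fun j _ => (hpos j).le
    have hnn2 : (0:ℝ) ≤ ∑ j ∈ univ.erase i, (μ j)⁻¹ :=
      Finset.sum_nonneg fun j _ => (inv_pos.2 (hpos j)).le
    have hle1 : ∑ j ∈ univ.erase i, μ j ≤ m + ε - lam := by
      rw [hsum1]; linarith
    have hle2 : ∑ j ∈ univ.erase i, (μ j)⁻¹ ≤ m - lam⁻¹ := by
      rw [hsum2]; linarith
    have cs := Finset.sum_mul_sq_le_sq_mul_sq (univ.erase i)
      (fun j => Real.sqrt (μ j)) (fun j => (Real.sqrt (μ j))⁻¹)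
    have hL : ∑ j ∈ univ.erase i, Real.sqrt (μ j) * (Real.sqrt (μ j))⁻¹
        = ((m:ℝ) - 1) := by
      rw [Finset.sum_congr rfl (fun j _ => mul_inv_cancel₀
        (ne_of_gt (Real.sqrt_pos.2 (hpos j))))]
      simp [Finset.card_erase_of_mem, Nat.cast_sub hm]
    have hf2 : ∀ j, (Real.sqrt (μ j))^2 = μ j := fun j => Real.sq_sqrt (hpos j).le
    have hg2 : ∀ j, ((Real.sqrt (μ j))⁻¹)^2 = (μ j)⁻¹ := fun j => by
      rw [inv_pow, hf2]
    rw [hL] at cs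
    simp only [hf2, hg2] at cs
    calc ((m:ℝ)-1)^2 ≤ (∑ j ∈ univ.erase i, μ j) * (∑ j ∈ univ.erase i, (μ j)⁻¹) := cs
      _ ≤ (m + ε - lam) * (m - lam⁻¹) := mul_le_mul hle1 hle2 hnn2 (by linarith)
  -- derive quadratic inequality
  have hquad : lam^2 - (ε + 2) * lam + (m + ε) / m ≤ 0 := by
    have h3 : ((m:ℝ)-1)^2 * lam ≤ (m + ε - lam) * (m * lam - 1) := by
      have := mul_le_mul_of_nonneg_right key hlpos.le
      calc ((m:ℝ)-1)^2 * lam ≤ (m + ε - lam) * (m - lam⁻¹) * lam := this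
        _ = (m + ε - lam) * (m * lam - lam⁻¹ * lam) := by ring
        _ = (m + ε - lam) * (m * lam - 1) := by rw [inv_mul_cancel₀ (ne_of_gt hlpos)]
    have hmpos : (0:ℝ) < m := by exact_mod_cast hm
    have hq : (lam^2 - (ε + 2) * lam) * m + (m + ε) ≤ 0 := by nlinarith [h3]
    have heq : lam^2 - (ε + 2) * lam + (m + ε) / m
        = ((lam^2 - (ε + 2) * lam) * m + (m + ε)) / m := by
      field_simp
    rw [heq]
    exact div_nonpos_of_nonpos_of_nonneg hq hmpos.le
  -- solve quadratic
  have hdisc : (ε + 2)^2 - 4 * ((m + ε) / m) = ε * (4 + ε - 4 / m) := by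
    field_simp
    ring
  set D := ε * (4 + ε - 4 / m) with hD
  have hDnn : 0 ≤ D := by
    apply mul_nonneg hε
    have : 4 / (m:ℝ) ≤ 4 := by
      apply div_le_self (by norm_num) hmR
    linarith
  have hsq : (lam - (ε + 2)/2)^2 ≤ D / 4 := by nlinarith [hquad, hdisc]
  have h4 : Real.sqrt D ^ 2 = D := Real.sq_sqrt hDnn
  nlinarith [Real.sqrt_nonneg D, hsq, h4, sq_nonneg (lam - (ε+2)/2 + Real.sqrt D / 2)]




lemma trace_mul_vecMulVec {m : ℕ} (A : Matrix (Fin m) (Fin m) ℝ) (x : Fin m → ℝ) :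
    (A * vecMulVec x x).trace = x ⬝ᵥ A *ᵥ x := by
  simp only [Matrix.trace, Matrix.diag, Matrix.mul_apply, vecMulVec_apply,
    dotProduct, Matrix.mulVec, Finset.mul_sum]
  refine Finset.sum_congr rfl fun i _ => Finset.sum_congr rfl fun j _ => by ring


lemma trace_mul_infoM {m : ℕ} (A : Matrix (Fin m) (Fin m) ℝ)
    (S : Finset (Fin m → ℝ)) (v : (Fin m → ℝ) → ℝ) :
    (A * infoM m S v).trace = ∑ x ∈ S, v x * (x ⬝ᵥ A *ᵥ x) := by
  rw [infoM, Finset.mul_sum, trace_sum]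
  refine Finset.sum_congr rfl fun x _ => ?_
  rw [Matrix.mul_smul, trace_smul, trace_mul_vecMulVec, smul_eq_mul]

lemma posSemidef_vecMulVec {m : ℕ} (x : Fin m → ℝ) : (vecMulVec x x).PosSemidef := by
  rw [vecMulVec_eq Unit]
  have h := Matrix.posSemidef_conjTranspose_mul_self (Matrix.replicateRow Unit x)
  rwa [Matrix.conjTranspose_replicateRow, star_trivial] at h

lemma posSemidef_smul {m : ℕ} {A : Matrix (Fin m) (Fin m) ℝ} (hA : A.PosSemidef)
    {c : ℝ} (hc : 0 ≤ c) : (c • A).PosSemidef := by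
  refine Matrix.PosSemidef.of_dotProduct_mulVec_nonneg ?_ fun y => ?_
  · unfold Matrix.IsHermitian
    rw [conjTranspose_smul, hA.1]
    simp
  · rw [Matrix.smul_mulVec, dotProduct_smul, smul_eq_mul]
    exact mul_nonneg hc (hA.dotProduct_mulVec_nonneg y)

lemma infoM_posSemidef {m : ℕ} (S : Finset (Fin m → ℝ)) (v : (Fin m → ℝ) → ℝ)
    (hv : ∀ x, 0 ≤ v x) : (infoM m S v).PosSemidef := by
  unfold infoM
  classical
  induction S using Finset.induction with
  | empty => simpa using Matrix.PosSemidef.zero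
  | @insert a s hx ih =>
      rw [Finset.sum_insert hx]
      exact Matrix.PosSemidef.add (posSemidef_smul (posSemidef_vecMulVec a) (hv a)) ih

lemma posDef_of_isUnit_det {m : ℕ} {A : Matrix (Fin m) (Fin m) ℝ} (hA : A.PosSemidef)
    (h : IsUnit A.det) : A.PosDef := by
  refine Matrix.PosDef.of_dotProduct_mulVec_pos hA.1 fun y hy => ?_
  rcases lt_or_eq_of_le (hA.dotProduct_mulVec_nonneg y) with h1 | h1
  · simpa using h1
  · exfalso
    have h2 : A *ᵥ y = 0 := (hA.dotProduct_mulVec_zero_iff y).mp h1.symm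
    have h3 : Function.Injective (A.mulVec) := Matrix.mulVec_injective_iff_isUnit.2
      (Matrix.isUnit_iff_isUnit_det A |>.2 h)
    exact hy (h3 (by simpa using h2))

-- mixture of designs
lemma infoM_mix {m : ℕ} (S : Finset (Fin m → ℝ)) (wstar : (Fin m → ℝ) → ℝ)
    (x : Fin m → ℝ) (hx : x ∈ S) (t : ℝ) :
    infoM m S (fun z => (1 - t) * wstar z + t * (if z = x then 1 else 0))
      = (1 - t) • infoM m S wstar + t • vecMulVec x x := by
  classical
  unfold infoM
  have step : ∀ z ∈ S, ((1 - t) * wstar z + t * (if z = x then (1:ℝ) else 0)) • vecMulVec z z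
      = (1 - t) • (wstar z • vecMulVec z z)
        + (if z = x then t • vecMulVec x x else 0) := by
    intro z _
    rw [add_smul, smul_smul]
    congr 1
    split
    · rename_i h; subst h; rw [mul_one]
    · simp [*]
  rw [Finset.sum_congr rfl step, Finset.sum_add_distrib, ← Finset.smul_sum,
    Finset.sum_ite_eq' S x (fun _ => t • vecMulVec x x), if_pos hx]

lemma dvar_le_of_dOptimal {m : ℕ} (hm : 0 < m) {S : Finset (Fin m → ℝ)}
    {wstar : (Fin m → ℝ) → ℝ} (hopt : IsDOptimal m S wstar)
    (hMstar : IsUnit (infoM m S wstar).det) {x : Fin m → ℝ} (hx : x ∈ S) :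
    dvar m S wstar x ≤ m := by
  classical
  by_contra hlt
  push_neg at hlt
  set Mst := infoM m S wstar with hMstdef
  have hwnn := hopt.1.1
  have hdetpos : 0 < Mst.det := by
    have := posDef_of_isUnit_det (infoM_posSemidef S wstar hwnn) hMstar
    exact this.det_pos
  set d := dvar m S wstar x with hd
  have hmR : (1:ℝ) ≤ m := by exact_mod_cast hm
  have hd0 : (0:ℝ) < d := lt_of_lt_of_le (by linarith) hlt.le
  set t := min (1/2 : ℝ) ((d - m)/(d * m)) with ht
  have htpos : 0 < t := by
    apply lt_min (by norm_num)
    apply div_pos (by linarith)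
    positivity
  have ht2 : t ≤ 1/2 := min_le_left _ _
  have htdm' : t ≤ (d - m)/(d * m) := min_le_right _ _
  have htdm : t * (d * m) ≤ d - m := by
    rw [← le_div_iff₀ (by positivity)]
    exact htdm'
  have ha : (0:ℝ) < 1 - t := by linarith
  -- the perturbed design
  set v := fun z => (1 - t) * wstar z + t * (if z = x then (1:ℝ) else 0) with hv
  have hvdes : IsDesign m S v := by
    constructor
    · intro z
      have : (0:ℝ) ≤ if z = x then (1:ℝ) else 0 := by positivity
      exact add_nonneg (mul_nonneg ha.le (hwnn z)) (mul_nonneg htpos.le this)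
    · simp only [hv]
      rw [Finset.sum_add_distrib, ← Finset.mul_sum, ← Finset.mul_sum, hopt.1.2,
        Finset.sum_ite_eq' S x (fun _ => (1:ℝ)), if_pos hx]
      ring
  have hdet := hopt.2 v hvdes
  rw [infoM_mix S wstar x hx t, ← hMstdef] at hdet
  -- rewrite rank-one term
  have hcol : t • vecMulVec x x = Matrix.replicateCol Unit (t • x) * Matrix.replicateRow Unit x := by
    rw [← vecMulVec_eq]
    ext i j
    simp [vecMulVec_apply, mul_assoc]
  have hAunit : IsUnit ((1 - t) • Mst).det := by
    rw [Matrix.det_smul]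
    apply IsUnit.mul _ hMstar
    exact (isUnit_iff_ne_zero).2 (pow_ne_zero _ ha.ne')
  rw [hcol, Matrix.det_add_replicateCol_mul_replicateRow hAunit] at hdet
  -- compute the 1×1 determinant
  have hinvertible : Invertible (1 - t) := invertibleOfNonzero ha.ne'
  have hinv : ((1 - t) • Mst)⁻¹ = (1 - t)⁻¹ • Mst⁻¹ := by
    rw [Matrix.inv_smul (1-t) (A := Mst) hMstar, invOf_eq_inv (1-t)]
  have hone : (1 + Matrix.replicateRow Unit x * ((1 - t) • Mst)⁻¹ * Matrix.replicateCol Unit (t • x)).det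
      = 1 + (1 - t)⁻¹ * (t * d) := by
    rw [hinv, Matrix.det_unique]
    simp only [Matrix.add_apply, Matrix.one_apply_eq]
    congr 1
    rw [← Matrix.replicateRow_vecMul, Matrix.replicateRow_mul_replicateCol_apply, ← Matrix.dotProduct_mulVec,
      Matrix.mulVec_smul, dotProduct_smul, Matrix.smul_mulVec, dotProduct_smul]
    have hdd : x ⬝ᵥ Mst⁻¹ *ᵥ x = d := rfl
    rw [hdd, smul_eq_mul, smul_eq_mul]
    ring
  rw [hone, Matrix.det_smul, Fintype.card_fin] at hdet
  -- now hdet : (1-t)^m * Mst.det * (1 + (1-t)⁻¹ * (t*d)) ≤ Mst.det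
  have key : (1 - t)^m * (1 + (1 - t)⁻¹ * (t * d)) ≤ 1 := by
    have h2 : ((1 - t)^m * (1 + (1 - t)⁻¹ * (t * d))) * Mst.det ≤ 1 * Mst.det := by
      rw [one_mul]
      calc ((1 - t)^m * (1 + (1 - t)⁻¹ * (t * d))) * Mst.det
          = (1 - t)^m * Mst.det * (1 + (1 - t)⁻¹ * (t * d)) := by ring
        _ ≤ Mst.det := hdet
    exact le_of_mul_le_mul_right h2 hdetpos
  -- expand: (1-t)^m * (1 + (1-t)⁻¹ t d) = (1-t)^m + (1-t)^(m-1) * (t*d)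
  obtain ⟨n, rfl⟩ : ∃ n, m = n + 1 := ⟨m - 1, by omega⟩
  have hexp : (1 - t)^(n+1) * (1 + (1 - t)⁻¹ * (t * d))
      = (1 - t)^(n+1) + (1 - t)^n * (t * d) := by
    rw [pow_succ]
    field_simp
  rw [hexp] at key
  -- Bernoulli bounds
  have hb1 : 1 - (n+1 : ℝ) * t ≤ (1 - t)^(n+1) := by
    have := one_add_mul_le_pow (a := -t) (by linarith) (n+1)
    rw [sub_eq_add_neg 1 t]
    push_cast at this ⊢
    linarith
  have hb2 : 1 - (n : ℝ) * t ≤ (1 - t)^n := by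
    have := one_add_mul_le_pow (a := -t) (by linarith) n
    rw [sub_eq_add_neg 1 t]
    push_cast at this ⊢
    linarith
  have htd : 0 < t * d := mul_pos htpos hd0
  have key2 : (1 - (n+1:ℝ) * t) + (1 - (n:ℝ) * t) * (t * d) ≤ 1 := by
    have := mul_le_mul_of_nonneg_right hb2 htd.le
    nlinarith [key, hb1]
  -- final contradiction
  have hmcast : ((n+1:ℕ) : ℝ) = (n:ℝ) + 1 := by push_cast; ring
  rw [hmcast] at hlt htdm
  nlinarith [mul_le_mul_of_nonneg_left htdm htpos.le, mul_pos (mul_pos htpos htpos) hd0,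
    mul_pos htpos htpos, key2, mul_le_mul_of_nonneg_right htdm htpos.le]

lemma sum_mul_dvar {m : ℕ} (S : Finset (Fin m → ℝ)) (u v : (Fin m → ℝ) → ℝ) :
    ((infoM m S u)⁻¹ * infoM m S v).trace = ∑ x ∈ S, v x * dvar m S u x :=
  trace_mul_infoM _ S v

lemma trace_inv_self {m : ℕ} (S : Finset (Fin m → ℝ)) (u : (Fin m → ℝ) → ℝ)
    (hu : IsUnit (infoM m S u).det) :
    ∑ x ∈ S, u x * dvar m S u x = m := by
  rw [← sum_mul_dvar S u u, Matrix.nonsing_inv_mul _ hu, Matrix.trace_one, Fintype.card_fin]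

lemma dvar_star_eq {m : ℕ} (hm : 0 < m) {S : Finset (Fin m → ℝ)}
    {wstar : (Fin m → ℝ) → ℝ} (hopt : IsDOptimal m S wstar)
    (hMstar : IsUnit (infoM m S wstar).det) {xstar : Fin m → ℝ} (hx : xstar ∈ S)
    (hsupp : 0 < wstar xstar) : dvar m S wstar xstar = m := by
  have hsum := trace_inv_self S wstar hMstar
  have hnn : ∀ x ∈ S, 0 ≤ wstar x * ((m:ℝ) - dvar m S wstar x) := fun x hxS =>
    mul_nonneg (hopt.1.1 x) (by linarith [dvar_le_of_dOptimal hm hopt hMstar hxS])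
  have hzero : ∑ x ∈ S, wstar x * ((m:ℝ) - dvar m S wstar x) = 0 := by
    have : ∑ x ∈ S, wstar x * ((m:ℝ) - dvar m S wstar x)
        = (m:ℝ) * ∑ x ∈ S, wstar x - ∑ x ∈ S, wstar x * dvar m S wstar x := by
      rw [Finset.mul_sum, ← Finset.sum_sub_distrib]
      exact Finset.sum_congr rfl fun x _ => by ring
    rw [this, hopt.1.2, hsum]; ring
  have := (Finset.sum_eq_zero_iff_of_nonneg hnn).mp hzero xstar hx
  have h2 : (m:ℝ) - dvar m S wstar xstar = 0 := by
    rcases mul_eq_zero.mp this with h | h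
    · exact absurd h hsupp.ne'
    · exact h
  linarith


/-- Any support point x* of a D-optimum design satisfies
d(ξ,x*) ≥ h_m(ε) = m[1 + ε/2 − √(ε(4+ε−4/m))/2], where
ε = max_{x∈X} d(ξ,x) − m. -/
theorem support_point_lower_bound
    (m : ℕ) (S : Finset (Fin m → ℝ)) (hS : S.Nonempty)
    (w wstar : (Fin m → ℝ) → ℝ)
    (hw : IsDesign m S w) (hM : IsUnit (infoM m S w).det)
    (hopt : IsDOptimal m S wstar) (hMstar : IsUnit (infoM m S wstar).det)
    (xstar : Fin m → ℝ) (hx : xstar ∈ S) (hsupp : 0 < wstar xstar)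
    (ε : ℝ) (hε : ε = S.sup' hS (fun x => dvar m S w x) - m) :
    m * (1 + ε / 2 - Real.sqrt (ε * (4 + ε - 4 / m)) / 2) ≤ dvar m S w xstar := by
  classical
  rcases Nat.eq_zero_or_pos m with hm0 | hm
  · subst hm0
    simp [dvar, dotProduct]
  have hmR : (1:ℝ) ≤ m := by exact_mod_cast hm
  set M := infoM m S w with hMdef
  set Mst := infoM m S wstar with hMstdef
  have hMpd : M.PosDef := posDef_of_isUnit_det (infoM_posSemidef S w hw.1) hM
  have hMstpd : Mst.PosDef := posDef_of_isUnit_det (infoM_posSemidef S wstar hopt.1.1) hMstar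
  -- ε ≥ 0
  have hsup : ∀ x ∈ S, dvar m S w x ≤ (m:ℝ) + ε := by
    intro x hxS
    have := Finset.le_sup' (fun x => dvar m S w x) hxS
    rw [hε]; linarith
  have hε0 : 0 ≤ ε := by
    have h1 := trace_inv_self S w hM
    have h2 : (m:ℝ) ≤ S.sup' hS (fun x => dvar m S w x) := by
      calc (m:ℝ) = ∑ x ∈ S, w x * dvar m S w x := h1.symm
        _ ≤ ∑ x ∈ S, w x * S.sup' hS (fun x => dvar m S w x) := by
            refine Finset.sum_le_sum fun x hxS => ?_
            exact mul_le_mul_of_nonneg_left (Finset.le_sup' _ hxS) (hw.1 x)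
        _ = S.sup' hS (fun x => dvar m S w x) := by rw [← Finset.sum_mul, hw.2, one_mul]
    rw [hε]; linarith
  -- square root of Mst
  set R := (open scoped MatrixOrder in CFC.sqrt Mst) with hRdef
  have hRpsd : R.PosSemidef := (open scoped MatrixOrder in (CFC.sqrt_nonneg Mst).posSemidef)
  have hRherm : R.IsHermitian := hRpsd.1
  have hRR : R * R = Mst := (open scoped MatrixOrder in CFC.sqrt_mul_sqrt_self Mst hMstpd.posSemidef.nonneg)
  have hRdet : IsUnit R.det := by
    have : R.det * R.det = Mst.det := by rw [← Matrix.det_mul, hRR]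
    exact isUnit_of_mul_isUnit_left (this ▸ hMstar)
  have hRinvRinv : R⁻¹ * R⁻¹ = Mst⁻¹ := by rw [← Matrix.mul_inv_rev, hRR]
  -- K = R M⁻¹ R
  set K := R * M⁻¹ * R with hKdef
  have hMinvpd : M⁻¹.PosDef := hMpd.inv
  have hKpsd : K.PosSemidef := by
    have := hMinvpd.posSemidef.mul_mul_conjTranspose_same R
    rwa [hRherm.eq] at this
  have hKdet : IsUnit K.det := by
    rw [hKdef, Matrix.det_mul, Matrix.det_mul]
    exact (hRdet.mul ((Matrix.isUnit_nonsing_inv_det M hM))).mul hRdet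
  have hKpd : K.PosDef := posDef_of_isUnit_det hKpsd hKdet
  have hKherm : K.IsHermitian := hKpd.1
  set μ := hKherm.eigenvalues with hμdef
  have hμpos : ∀ i, 0 < μ i := hKpd.eigenvalues_pos
  set U := (hKherm.eigenvectorUnitary : Matrix (Fin m) (Fin m) ℝ) with hUdef
  have hUUstar : U * star U = 1 := (Matrix.mem_unitaryGroup_iff).mp hKherm.eigenvectorUnitary.2
  have hstarUU : star U * U = 1 := Unitary.coe_star_mul_self hKherm.eigenvectorUnitary
  have hspec : K = U * Matrix.diagonal μ * star U := by
    have h := hKherm.spectral_theorem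
    have hof : (RCLike.ofReal ∘ μ : Fin m → ℝ) = μ := funext fun i => rfl
    rwa [hof] at h
  -- trace K = ∑ μ
  have htrK : K.trace = ∑ i, μ i := by
    rw [hspec, Matrix.trace_mul_cycle, hstarUU, Matrix.one_mul, Matrix.trace_diagonal]
  -- K⁻¹ and its trace
  have hKinv : K⁻¹ = U * Matrix.diagonal (fun i => (μ i)⁻¹) * star U := by
    apply Matrix.inv_eq_right_inv
    rw [hspec]
    calc U * Matrix.diagonal μ * star U * (U * Matrix.diagonal (fun i => (μ i)⁻¹) * star U)
        = U * Matrix.diagonal μ * (star U * U) * Matrix.diagonal (fun i => (μ i)⁻¹) * star U := by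
          simp only [Matrix.mul_assoc]
      _ = U * (Matrix.diagonal μ * Matrix.diagonal (fun i => (μ i)⁻¹)) * star U := by
          rw [hstarUU]; simp only [Matrix.mul_one, Matrix.mul_assoc]
      _ = 1 := by
          rw [Matrix.diagonal_mul_diagonal]
          have : (fun i => μ i * (μ i)⁻¹) = fun _ => (1:ℝ) :=
            funext fun i => mul_inv_cancel₀ (hμpos i).ne'
          rw [this, Matrix.diagonal_one, Matrix.mul_one, hUUstar]
  have htrKinv : K⁻¹.trace = ∑ i, (μ i)⁻¹ := by
    rw [hKinv, Matrix.trace_mul_cycle, hstarUU, Matrix.one_mul, Matrix.trace_diagonal]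
  -- trace bounds
  have htr1 : ∑ i, μ i ≤ (m:ℝ) + ε := by
    rw [← htrK]
    have heq : K.trace = (M⁻¹ * Mst).trace := by
      rw [hKdef, Matrix.trace_mul_cycle, hRR, Matrix.trace_mul_comm]
    rw [heq, hMdef, hMstdef, sum_mul_dvar]
    calc ∑ x ∈ S, wstar x * dvar m S w x ≤ ∑ x ∈ S, wstar x * ((m:ℝ) + ε) := by
          refine Finset.sum_le_sum fun x hxS => ?_
          exact mul_le_mul_of_nonneg_left (hsup x hxS) (hopt.1.1 x)
      _ = (m:ℝ) + ε := by rw [← Finset.sum_mul, hopt.1.2, one_mul]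
  have htr2 : ∑ i, (μ i)⁻¹ ≤ (m:ℝ) := by
    rw [← htrKinv]
    have hKinv2 : K⁻¹ = R⁻¹ * M * R⁻¹ := by
      apply Matrix.inv_eq_right_inv
      rw [hKdef]
      calc R * M⁻¹ * R * (R⁻¹ * M * R⁻¹)
          = R * M⁻¹ * (R * R⁻¹) * M * R⁻¹ := by simp only [Matrix.mul_assoc]
        _ = R * (M⁻¹ * M) * R⁻¹ := by
            rw [Matrix.mul_nonsing_inv _ hRdet]; simp only [Matrix.mul_one, Matrix.mul_assoc]
        _ = 1 := by rw [Matrix.nonsing_inv_mul _ hM, Matrix.mul_one,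
            Matrix.mul_nonsing_inv _ hRdet]
    have heq : K⁻¹.trace = (Mst⁻¹ * M).trace := by
      rw [hKinv2, Matrix.trace_mul_cycle, hRinvRinv]
    rw [heq, hMdef, hMstdef, sum_mul_dvar]
    calc ∑ x ∈ S, w x * dvar m S wstar x ≤ ∑ x ∈ S, w x * (m:ℝ) := by
          refine Finset.sum_le_sum fun x hxS => ?_
          exact mul_le_mul_of_nonneg_left (dvar_le_of_dOptimal hm hopt hMstar hxS) (hw.1 x)
      _ = (m:ℝ) := by rw [← Finset.sum_mul, hw.2, one_mul]
  -- eigenvalue lower bound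
  set c := 1 + ε / 2 - Real.sqrt (ε * (4 + ε - 4 / m)) / 2 with hcdef
  have hc : ∀ i, c ≤ μ i := fun i => scalar_bound m hm ε hε0 μ hμpos htr1 htr2 i
  -- K - c•1 is PSD
  have hKc : (K - c • (1 : Matrix (Fin m) (Fin m) ℝ)).PosSemidef := by
    have hdecomp : K - c • (1 : Matrix (Fin m) (Fin m) ℝ)
        = U * Matrix.diagonal (fun i => μ i - c) * star U := by
      have hdc : (Matrix.diagonal (fun _ => c) : Matrix (Fin m) (Fin m) ℝ)
          = c • (1 : Matrix (Fin m) (Fin m) ℝ) := by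
        ext i j
        rcases eq_or_ne i j with rfl | h
        · simp
        · simp [Matrix.diagonal_apply_ne _ h, Matrix.one_apply_ne h]
      have h1 : c • (1 : Matrix (Fin m) (Fin m) ℝ)
          = U * Matrix.diagonal (fun _ => c) * star U := by
        rw [hdc, Matrix.mul_smul, Matrix.mul_one, Matrix.smul_mul, hUUstar]
      rw [hspec, h1, ← Matrix.sub_mul, ← Matrix.mul_sub, Matrix.diagonal_sub]
    rw [hdecomp]
    have hdiag : (Matrix.diagonal (fun i => μ i - c)).PosSemidef :=
      Matrix.PosSemidef.diagonal (fun i => by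
        simp only [Pi.zero_apply]
        linarith [hc i])
    have := hdiag.mul_mul_conjTranspose_same U
    rw [Matrix.star_eq_conjTranspose]
    exact this
  -- assemble
  have hRinvherm : (R⁻¹)ᵀ = R⁻¹ := by
    have := Matrix.conjTranspose_nonsing_inv (A := R)
    rw [hRherm.eq] at this
    simpa using this
  set y := R⁻¹ *ᵥ xstar with hydef
  have hRy : R⁻¹ *ᵥ xstar = xstar ᵥ* R⁻¹ := by rw [← Matrix.mulVec_transpose, hRinvherm]
  have hyy : y ⬝ᵥ y = (m:ℝ) := by
    have h1 : y ⬝ᵥ y = xstar ⬝ᵥ Mst⁻¹ *ᵥ xstar := by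
      rw [hydef]
      nth_rewrite 1 [hRy]
      rw [← Matrix.dotProduct_mulVec, Matrix.mulVec_mulVec, hRinvRinv]
    rw [h1]
    exact dvar_star_eq hm hopt hMstar hx hsupp
  have hKy : y ⬝ᵥ K *ᵥ y = dvar m S w xstar := by
    have hKR : K * R⁻¹ = R * M⁻¹ := by
      calc K * R⁻¹ = R * M⁻¹ * (R * R⁻¹) := by rw [hKdef]; simp only [Matrix.mul_assoc]
        _ = R * M⁻¹ := by rw [Matrix.mul_nonsing_inv _ hRdet, Matrix.mul_one]
    have h2 : K *ᵥ y = (R * M⁻¹) *ᵥ xstar := by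
      rw [hydef, Matrix.mulVec_mulVec, hKR]
    rw [h2, hydef, hRy, ← Matrix.dotProduct_mulVec, Matrix.mulVec_mulVec, ← Matrix.mul_assoc,
      Matrix.nonsing_inv_mul _ hRdet, Matrix.one_mul]
    rfl
  have hfin := hKc.dotProduct_mulVec_nonneg y
  have hexpand : star y ⬝ᵥ (K - c • (1 : Matrix (Fin m) (Fin m) ℝ)) *ᵥ y
      = y ⬝ᵥ K *ᵥ y - c * (y ⬝ᵥ y) := by
    rw [star_trivial, Matrix.sub_mulVec, dotProduct_sub, Matrix.smul_mulVec,
      Matrix.one_mulVec, dotProduct_smul, smul_eq_mul]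
  rw [hexpand, hKy, hyy] at hfin
  linarith
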